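/- Let c ∈ ℂ with c ≠ 0 and let n ≥ 1. If σ(z) = az + b is an affine map with φ_c^{∘n} ∘ σ = φ_c^{∘n} (where φ_c(z) = z² + c), then σ(z) = z or σ(z) = −z. That is, Σ(φ_c^{∘n}) = {z, −z} for all n ≥ 1. -/

import Mathlib

open Polynomial

/-- The `n`-th compositional iterate of a polynomial. -/
noncomputable def polyIter (φ : Polynomial ℂ) (n : ℕ) : Polynomial ℂ :=
  (fun q => φ.comp q)^[n] Polynomial.X

lemma polyIter_zero (φ : Polynomial ℂ) : polyIter φ 0 = X := rfl

lemma polyIter_succ (φ : Polynomial ℂ) (n : ℕ) :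
    polyIter φ (n + 1) = φ.comp (polyIter φ n) := by
  simp [polyIter, Function.iterate_succ_apply']

lemma polyIter_one (φ : Polynomial ℂ) : polyIter φ 1 = φ := by
  simp [polyIter_succ, polyIter_zero]

lemma polyIter_monic (c : ℂ) (n : ℕ) :
    (polyIter (X ^ 2 + C c) n).Monic ∧ (polyIter (X ^ 2 + C c) n).natDegree = 2 ^ n := by
  induction n with
  | zero => simp [polyIter_zero, monic_X]
  | succ n ih =>
    obtain ⟨hm, hd⟩ := ih
    rw [polyIter_succ]
    have hcomp : (X ^ 2 + C c).comp (polyIter (X ^ 2 + C c) n)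
        = (polyIter (X ^ 2 + C c) n) ^ 2 + C c := by
      simp [add_comp, pow_comp]
    rw [hcomp]
    have hm2 : ((polyIter (X ^ 2 + C c) n) ^ 2).Monic := hm.pow 2
    have hd2 : ((polyIter (X ^ 2 + C c) n) ^ 2).natDegree = 2 ^ (n + 1) := by
      rw [hm.natDegree_pow, hd]; ring
    have hdeg : (C c).degree < ((polyIter (X ^ 2 + C c) n) ^ 2).degree := by
      rw [degree_eq_natDegree hm2.ne_zero, hd2]
      calc (C c).degree ≤ 0 := degree_C_le
        _ < (2 ^ (n + 1) : ℕ) := by exact_mod_cast WithBot.coe_lt_coe.mpr (by positivity)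
    refine ⟨hm2.add_of_left hdeg, ?_⟩
    rw [natDegree_add_eq_left_of_degree_lt hdeg, hd2]

lemma polyIter_even (c : ℂ) (n : ℕ) (hn : 1 ≤ n) :
    (polyIter (X ^ 2 + C c) n).comp (-X) = polyIter (X ^ 2 + C c) n := by
  induction n with
  | zero => omega
  | succ n ih =>
    rcases Nat.eq_zero_or_pos n with h0 | h1
    · subst h0
      simp only [zero_add, polyIter_one]
      simp [add_comp, pow_comp, neg_pow]
    · rw [polyIter_succ, comp_assoc, ih h1]

lemma key (c : ℂ) (hc : c ≠ 0) : ∀ n : ℕ, 1 ≤ n → ∀ a b : ℂ, a ≠ 0 →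
    ((polyIter (X ^ 2 + C c) n).comp (C a * X + C b) = polyIter (X ^ 2 + C c) n →
      (a = 1 ∧ b = 0) ∨ (a = -1 ∧ b = 0)) ∧
    ((polyIter (X ^ 2 + C c) n).comp (C a * X + C b) ≠ - polyIter (X ^ 2 + C c) n) := by
  intro n
  induction n with
  | zero => omega
  | succ n ih =>
    intro _ a b ha
    rcases Nat.eq_zero_or_pos n with h0 | h1
    · -- base case: n + 1 = 1
      subst h0
      simp only [zero_add, polyIter_one]
      constructor
      · intro h
        have h0 := congrArg (eval 0) h
        have h1 := congrArg (eval 1) h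
        simp [eval_comp] at h0 h1
        subst h0
        rcases h1 with h' | h'
        · exact Or.inl ⟨by linear_combination h', rfl⟩
        · exact Or.inr ⟨by linear_combination h', rfl⟩
      · intro h
        have h0 := congrArg (eval 0) h
        have h1 := congrArg (eval 1) h
        have h2 := congrArg (eval (-1)) h
        simp [eval_comp] at h0 h1 h2
        have hb : b = 0 := by
          have h4 : a * (4 * b) = 0 := by linear_combination h1 - h2
          rcases mul_eq_zero.mp h4 with h' | h'
          · exact absurd h' ha
          · linear_combination h' / 4
        subst hb
        exact hc (by linear_combination h0 / 2)
    · -- inductive step: n ≥ 1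
      have IH := ih h1 a b ha
      set P := polyIter (X ^ 2 + C c) n with hP
      have hcompP : polyIter (X ^ 2 + C c) (n + 1) = P ^ 2 + C c := by
        rw [polyIter_succ]; simp [add_comp, pow_comp]; rfl
      have hu : (polyIter (X ^ 2 + C c) (n + 1)).comp (C a * X + C b)
          = (P.comp (C a * X + C b)) ^ 2 + C c := by
        rw [hcompP]; simp [add_comp, pow_comp]
      set u := P.comp (C a * X + C b) with hu'
      constructor
      · intro h
        rw [hu, hcompP] at h
        have h2 : (u - P) * (u + P) = 0 := by linear_combination h
        rcases mul_eq_zero.mp h2 with h' | h'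
        · exact IH.1 (by linear_combination h')
        · exact absurd (show u = -P by linear_combination h') IH.2
      · intro h
        rw [hu, hcompP] at h
        have hI : (C Complex.I : ℂ[X]) ^ 2 = -1 := by
          rw [← C_pow, Complex.I_sq]; simp
        have hfact : (u + C Complex.I * P) * (u - C Complex.I * P) = C (-2 * c) := by
          have hC : (C (-2 * c) : ℂ[X]) = -(2 * C c) := by
            simp [map_mul, map_neg, map_ofNat]
          rw [hC]
          linear_combination h - P ^ 2 * hI
        have hne : (C (-2 * c) : ℂ[X]) ≠ 0 := by
          simp [hc]
        have hf1 : u + C Complex.I * P ≠ 0 := by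
          intro h'; rw [h', zero_mul] at hfact; exact hne hfact.symm
        have hf2 : u - C Complex.I * P ≠ 0 := by
          intro h'; rw [h', mul_zero] at hfact; exact hne hfact.symm
        have hdeg : (u + C Complex.I * P).natDegree + (u - C Complex.I * P).natDegree = 0 := by
          rw [← natDegree_mul hf1 hf2, hfact, natDegree_C]
        obtain ⟨s, hs⟩ := natDegree_eq_zero.mp (by omega : (u + C Complex.I * P).natDegree = 0)
        obtain ⟨t, ht⟩ := natDegree_eq_zero.mp (by omega : (u - C Complex.I * P).natDegree = 0)
        have hPeq : C (2 * Complex.I) * P = C (s - t) := by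
          rw [map_mul, map_sub]
          rw [map_ofNat C 2]
          linear_combination hs.symm - ht.symm
        have hPdeg : P.natDegree = 0 := by
          have h2I : (2 : ℂ) * Complex.I ≠ 0 := by
            simp [Complex.I_ne_zero]
          have := congrArg natDegree hPeq
          rwa [natDegree_C_mul h2I, natDegree_C] at this
        have := (polyIter_monic c n).2
        rw [← hP, hPdeg] at this
        have : (2 : ℕ) ^ n ≠ 0 := by positivity
        omega

theorem stmt5 (c : ℂ) (hc : c ≠ 0) (n : ℕ) (hn : 1 ≤ n) :
    {σ : Polynomial ℂ | (∃ a b : ℂ, a ≠ 0 ∧ σ = C a * X + C b) ∧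
        (polyIter (X ^ 2 + C c) n).comp σ = polyIter (X ^ 2 + C c) n}
      = {X, -X} := by
  ext σ
  simp only [Set.mem_setOf_eq, Set.mem_insert_iff, Set.mem_singleton_iff]
  constructor
  · rintro ⟨⟨a, b, ha, rfl⟩, heq⟩
    rcases (key c hc n hn a b ha).1 heq with ⟨rfl, rfl⟩ | ⟨rfl, rfl⟩
    · left; simp
    · right; simp
  · rintro (rfl | rfl)
    · exact ⟨⟨1, 0, one_ne_zero, by simp⟩, by simp⟩
    · exact ⟨⟨-1, 0, by norm_num, by simp⟩, polyIter_even c n hn⟩
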